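/- Let (G, G_+) be a countable, torsion-free, unperforated, directed partially ordered abelian group with the Riesz interpolation property. Let a_1, …, a_m and b_1, …, b_n be elements of G_+ with Σ_{i=1}^m a_i = Σ_{j=1}^n b_j, and let R ⊆ {1, …, m} × {1, …, n} be such that for every subset A ⊆ {1, …, m}, Σ_{i∈A} a_i ≤ Σ_{j∈R_A} b_j. Then there exist c_{ij} ∈ G_+ (1 ≤ i ≤ m, 1 ≤ j ≤ n) such that Σ_{j=1}^n c_{ij} = a_i for every i, Σ_{i=1}^m c_{ij} = b_j for every j, and c_{ij} = 0 unless (i, j) ∈ R. -/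

import Mathlib

/-- For `R ⊆ {1,…,m} × {1,…,n}` and `A ⊆ {1,…,m}`, the set
`R_A = {j : (i,j) ∈ R for some i ∈ A}`. -/
def RA {m n : ℕ} (R : Finset (Fin m × Fin n)) (A : Finset (Fin m)) : Finset (Fin n) :=
  (R.filter (fun p => p.1 ∈ A)).image Prod.snd


section RAfacts
variable {m n : ℕ} {R : Finset (Fin m × Fin n)} {A B : Finset (Fin m)} {j : Fin n}

lemma mem_RA : j ∈ RA R A ↔ ∃ i ∈ A, (i, j) ∈ R := by
  simp only [RA, Finset.mem_image, Finset.mem_filter]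
  constructor
  · rintro ⟨⟨i, j'⟩, ⟨hR, hA⟩, rfl⟩
    exact ⟨i, hA, hR⟩
  · rintro ⟨i, hA, hR⟩
    exact ⟨(i, j), ⟨hR, hA⟩, rfl⟩

lemma RA_mono (h : A ⊆ B) : RA R A ⊆ RA R B := by
  intro j hj
  rw [mem_RA] at *
  obtain ⟨i, hi, hiR⟩ := hj
  exact ⟨i, h hi, hiR⟩

lemma RA_union : RA R (A ∪ B) = RA R A ∪ RA R B := by
  ext j
  simp only [Finset.mem_union, mem_RA, Finset.mem_union]
  aesop

lemma RA_empty : RA (∅ : Finset (Fin m × Fin n)) A = ∅ := by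
  simp [RA]

lemma mem_RA_erase {i0 : Fin m} {j0 j : Fin n} :
    j ∈ RA (R.erase (i0, j0)) A ↔ ∃ i ∈ A, (i, j) ∈ R ∧ (i, j) ≠ (i0, j0) := by
  rw [mem_RA]
  constructor
  · rintro ⟨i, hiA, hiR⟩
    rw [Finset.mem_erase] at hiR
    exact ⟨i, hiA, hiR.2, hiR.1⟩
  · rintro ⟨i, hiA, hiR, hne⟩
    exact ⟨i, hiA, Finset.mem_erase.2 ⟨hne, hiR⟩⟩

lemma RA_erase (i0 : Fin m) (j0 : Fin n) (A : Finset (Fin m)) :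
    RA (R.erase (i0, j0)) A =
      if j0 ∈ RA R (A.erase i0) then RA R A else (RA R A).erase j0 := by
  ext j
  by_cases hjj : j = j0
  · subst hjj
    split_ifs with h
    · rw [mem_RA_erase, mem_RA]
      constructor
      · rintro ⟨i, hiA, hiR, -⟩
        exact ⟨i, hiA, hiR⟩
      · rintro -
        obtain ⟨i, hiA', hiR⟩ := mem_RA.1 h
        rw [Finset.mem_erase] at hiA'
        exact ⟨i, hiA'.2, hiR, by simp [Prod.ext_iff, hiA'.1]⟩
    · rw [mem_RA_erase]
      simp only [Finset.mem_erase, ne_eq, not_true_eq_false, false_and, iff_false,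
        not_exists, not_and]
      rintro i hiA hiR hne
      have hine : i ≠ i0 := by
        rintro rfl
        exact hne rfl
      exact h (mem_RA.2 ⟨i, Finset.mem_erase.2 ⟨hine, hiA⟩, hiR⟩)
  · have h1 : j ∈ RA (R.erase (i0, j0)) A ↔ j ∈ RA R A := by
      rw [mem_RA_erase, mem_RA]
      constructor
      · rintro ⟨i, hiA, hiR, -⟩
        exact ⟨i, hiA, hiR⟩
      · rintro ⟨i, hiA, hiR⟩
        exact ⟨i, hiA, hiR, by simp [Prod.ext_iff, hjj]⟩
    rw [h1]
    split_ifs with h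
    · rfl
    · rw [Finset.mem_erase]
      simp [hjj]

end RAfacts

section Riesz
variable {G : Type*} [AddCommGroup G] [PartialOrder G] [IsOrderedAddMonoid G]
variable (hriesz : ∀ a₁ a₂ b₁ b₂ : G, a₁ ≤ b₁ → a₁ ≤ b₂ → a₂ ≤ b₁ → a₂ ≤ b₂ →
      ∃ c : G, a₁ ≤ c ∧ a₂ ≤ c ∧ c ≤ b₁ ∧ c ≤ b₂)

include hriesz in
lemma riesz2 (x1 x2 y : G) (l : List G) (h1y : x1 ≤ y) (h2y : x2 ≤ y)
    (hl : ∀ z ∈ l, x1 ≤ z ∧ x2 ≤ z) :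
    ∃ c, x1 ≤ c ∧ x2 ≤ c ∧ c ≤ y ∧ ∀ z ∈ l, c ≤ z := by
  induction l with
  | nil =>
    obtain ⟨c, h1, h2, h3, -⟩ := hriesz x1 x2 y y h1y h1y h2y h2y
    exact ⟨c, h1, h2, h3, by simp⟩
  | cons z l ih =>
    obtain ⟨c', g1, g2, g3, g4⟩ := ih (fun w hw => hl w (List.mem_cons_of_mem _ hw))
    obtain ⟨hz1, hz2⟩ := hl z (List.mem_cons_self)
    obtain ⟨c, h1, h2, h3, h4⟩ := hriesz x1 x2 c' z g1 hz1 g2 hz2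
    refine ⟨c, h1, h2, h3.trans g3, ?_⟩
    intro w hw
    rcases List.mem_cons.1 hw with rfl | hw
    · exact h4
    · exact h3.trans (g4 w hw)

include hriesz in
lemma riesz_many (lo hi : List G) (x y : G) (hxy : x ≤ y) (hx_hi : ∀ u ∈ hi, x ≤ u)
    (hlo_y : ∀ v ∈ lo, v ≤ y) (hlo_hi : ∀ v ∈ lo, ∀ u ∈ hi, v ≤ u) :
    ∃ c, x ≤ c ∧ (∀ v ∈ lo, v ≤ c) ∧ c ≤ y ∧ ∀ u ∈ hi, c ≤ u := by
  induction lo generalizing x with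
  | nil =>
    obtain ⟨c, h1, -, h3, h4⟩ := riesz2 hriesz x x y hi hxy hxy
      (fun z hz => ⟨hx_hi z hz, hx_hi z hz⟩)
    exact ⟨c, h1, by simp, h3, h4⟩
  | cons v lo ih =>
    obtain ⟨c', h1, h2, h3, h4⟩ := riesz2 hriesz x v y hi hxy
      (hlo_y v (List.mem_cons_self))
      (fun u hu => ⟨hx_hi u hu, hlo_hi v (List.mem_cons_self) u hu⟩)
    obtain ⟨c, g1, g2, g3, g4⟩ := ih c' h3 h4
      (fun w hw => hlo_y w (List.mem_cons_of_mem _ hw))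
      (fun w hw => hlo_hi w (List.mem_cons_of_mem _ hw))
    refine ⟨c, h1.trans g1, ?_, g3, g4⟩
    intro w hw
    rcases List.mem_cons.1 hw with rfl | hw
    · exact h2.trans g1
    · exact g2 w hw

end Riesz

section helpers
variable {G : Type*} [AddCommGroup G] [PartialOrder G] [IsOrderedAddMonoid G]

lemma sum_if_sub {ι : Type*} [DecidableEq ι] (s : Finset ι) {i0 : ι} (h : i0 ∈ s)
    (f : ι → G) (v : G) :
    ∑ i ∈ s, (if i = i0 then f i - v else f i) = ∑ i ∈ s, f i - v := by
  rw [← Finset.add_sum_erase s (fun i => if i = i0 then f i - v else f i) h,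
    ← Finset.add_sum_erase s f h]
  rw [if_pos rfl, Finset.sum_congr rfl (fun i hi => if_neg (Finset.ne_of_mem_erase hi))]
  abel

lemma sum_if_sub_not {ι : Type*} [DecidableEq ι] (s : Finset ι) {i0 : ι} (h : i0 ∉ s)
    (f : ι → G) (v : G) :
    ∑ i ∈ s, (if i = i0 then f i - v else f i) = ∑ i ∈ s, f i :=
  Finset.sum_congr rfl (fun i hi => if_neg (by rintro rfl; exact h hi))

lemma helper1 {x y z w v : G} (h : x + y + v ≤ z + w) : x - z + v ≤ w - y := by
  rw [sub_add_eq_add_sub, sub_le_sub_iff]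
  calc x + v + y = x + y + v := by abel
    _ ≤ z + w := h
    _ = w + z := by abel

lemma helper2 {p q r s : G} (h : q ≤ s) : p + q - (r + s) + r ≤ p := by
  have e : p + q - (r + s) + r = p + (q - s) := by abel
  rw [e]
  simpa using add_le_add_left (sub_nonpos.2 h) p

lemma helper3 {x y v : G} (h : x ≤ y) : x - y + v ≤ v := by
  simpa using add_le_add_right (sub_nonpos.2 h) v

lemma helper4 {x y v c : G} (h : x - y + v ≤ c) : x - c ≤ y - v := by
  rw [sub_le_sub_iff]
  rw [sub_add_eq_add_sub, sub_le_iff_le_add] at h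
  calc x + v ≤ c + y := h
    _ = y + c := by abel

lemma helper5 {x y c : G} (h : c ≤ y - x) : x ≤ y - c := by
  rw [le_sub_iff_add_le] at h ⊢
  calc x + c = c + x := by abel
    _ ≤ y := h

end helpers

section Key
variable {G : Type*} [AddCommGroup G] [PartialOrder G] [IsOrderedAddMonoid G]

lemma key_lemma
    (hriesz : ∀ a₁ a₂ b₁ b₂ : G, a₁ ≤ b₁ → a₁ ≤ b₂ → a₂ ≤ b₁ → a₂ ≤ b₂ →
      ∃ c : G, a₁ ≤ c ∧ a₂ ≤ c ∧ c ≤ b₁ ∧ c ≤ b₂) {m n : ℕ} :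
    ∀ (N : ℕ) (R : Finset (Fin m × Fin n)), R.card ≤ N →
    ∀ (a : Fin m → G) (b : Fin n → G),
      (∀ i, 0 ≤ a i) → (∀ j, 0 ≤ b j) → (∑ i, a i = ∑ j, b j) →
      (∀ A : Finset (Fin m), ∑ i ∈ A, a i ≤ ∑ j ∈ RA R A, b j) →
      ∃ c : Fin m → Fin n → G,
        (∀ i j, 0 ≤ c i j) ∧ (∀ i, ∑ j, c i j = a i) ∧ (∀ j, ∑ i, c i j = b j) ∧
        (∀ i j, (i, j) ∉ R → c i j = 0) := by
  intro N
  induction N with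
  | zero =>
    intro R hcard a b ha hb hsum hR
    have hRe : R = ∅ := Finset.card_eq_zero.1 (Nat.le_zero.1 hcard)
    subst hRe
    have ha0 : ∀ i, a i = 0 := by
      intro i
      have h1 := hR {i}
      rw [RA_empty] at h1
      simp only [Finset.sum_singleton, Finset.sum_empty] at h1
      exact le_antisymm h1 (ha i)
    have hb0 : ∀ j, b j = 0 := by
      intro j
      have hs : ∑ j', b j' = 0 := by
        rw [← hsum]; exact Finset.sum_eq_zero (fun i _ => ha0 i)
      have h1 : b j ≤ ∑ j', b j' :=
        Finset.single_le_sum (fun j' _ => hb j') (Finset.mem_univ j)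
      rw [hs] at h1
      exact le_antisymm h1 (hb j)
    refine ⟨fun _ _ => 0, fun _ _ => le_refl 0, ?_, ?_, fun _ _ _ => rfl⟩
    · intro i; rw [ha0 i]; exact Finset.sum_const_zero
    · intro j; rw [hb0 j]; exact Finset.sum_const_zero
  | succ N ih =>
    intro R hcard a b ha hb hsum hR
    rcases R.eq_empty_or_nonempty with rfl | ⟨⟨i0, j0⟩, hp⟩
    · exact ih ∅ (by simp) a b ha hb hsum hR
    have hj0 : ∀ {A : Finset (Fin m)}, i0 ∈ A → j0 ∈ RA R A :=
      fun {A} h => mem_RA.2 ⟨i0, h, hp⟩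
    -- bound inequalities
    have hL_le_a : ∀ A : Finset (Fin m), i0 ∈ A → j0 ∉ RA R (A.erase i0) →
        ∑ i ∈ A, a i - ∑ j ∈ RA R A, b j + b j0 ≤ a i0 := by
      intro A hiA hjA
      have e1 : a i0 + ∑ i ∈ A.erase i0, a i = ∑ i ∈ A, a i := Finset.add_sum_erase _ a hiA
      have e2 : b j0 + ∑ j ∈ (RA R A).erase j0, b j = ∑ j ∈ RA R A, b j :=
        Finset.add_sum_erase _ b (hj0 hiA)
      have hsub : RA R (A.erase i0) ⊆ (RA R A).erase j0 := by
        intro j hj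
        refine Finset.mem_erase.2 ⟨?_, RA_mono (Finset.erase_subset _ _) hj⟩
        rintro rfl; exact hjA hj
      have h3 : ∑ i ∈ A.erase i0, a i ≤ ∑ j ∈ (RA R A).erase j0, b j :=
        (hR (A.erase i0)).trans
          (Finset.sum_le_sum_of_subset_of_nonneg hsub (fun j _ _ => hb j))
      rw [← e1, ← e2]
      exact helper2 h3
    have hL_le_U : ∀ A B : Finset (Fin m), i0 ∈ A → j0 ∉ RA R (A.erase i0) →
        i0 ∉ B → j0 ∈ RA R B →
        ∑ i ∈ A, a i - ∑ j ∈ RA R A, b j + b j0 ≤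
          ∑ j ∈ RA R B, b j - ∑ i ∈ B, a i := by
      intro A B hiA hjA hiB hjB
      have f1 : ∑ i ∈ A ∪ B, a i ≤ ∑ j ∈ RA R A ∪ RA R B, b j := by
        have h1 := hR (A ∪ B); rwa [RA_union] at h1
      have hsub : RA R (A ∩ B) ⊆ (RA R A ∩ RA R B).erase j0 := by
        intro j hj
        refine Finset.mem_erase.2 ⟨?_, Finset.mem_inter.2
          ⟨RA_mono Finset.inter_subset_left hj, RA_mono Finset.inter_subset_right hj⟩⟩
        rintro rfl
        have hABsub : A ∩ B ⊆ A.erase i0 := by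
          intro i hi
          rw [Finset.mem_inter] at hi
          exact Finset.mem_erase.2 ⟨by rintro rfl; exact hiB hi.2, hi.1⟩
        exact hjA (RA_mono hABsub hj)
      have hj0in : j0 ∈ RA R A ∩ RA R B := Finset.mem_inter.2 ⟨hj0 hiA, hjB⟩
      have e3 : b j0 + ∑ j ∈ (RA R A ∩ RA R B).erase j0, b j
          = ∑ j ∈ RA R A ∩ RA R B, b j := Finset.add_sum_erase _ b hj0in
      have f2 : ∑ i ∈ A ∩ B, a i + b j0 ≤ ∑ j ∈ RA R A ∩ RA R B, b j := by
        have h4 : ∑ i ∈ A ∩ B, a i ≤ ∑ j ∈ (RA R A ∩ RA R B).erase j0, b j :=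
          (hR (A ∩ B)).trans
            (Finset.sum_le_sum_of_subset_of_nonneg hsub (fun j _ _ => hb j))
        calc ∑ i ∈ A ∩ B, a i + b j0
            ≤ ∑ j ∈ (RA R A ∩ RA R B).erase j0, b j + b j0 := add_le_add_left h4 _
          _ = ∑ j ∈ RA R A ∩ RA R B, b j := by rw [← e3]; abel
      have e1 : ∑ i ∈ A ∪ B, a i + ∑ i ∈ A ∩ B, a i = ∑ i ∈ A, a i + ∑ i ∈ B, a i :=
        Finset.sum_union_inter
      have e2 : ∑ j ∈ RA R A ∪ RA R B, b j + ∑ j ∈ RA R A ∩ RA R B, b j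
          = ∑ j ∈ RA R A, b j + ∑ j ∈ RA R B, b j := Finset.sum_union_inter
      have big : ∑ i ∈ A, a i + ∑ i ∈ B, a i + b j0
          ≤ ∑ j ∈ RA R A, b j + ∑ j ∈ RA R B, b j := by
        calc ∑ i ∈ A, a i + ∑ i ∈ B, a i + b j0
            = ∑ i ∈ A ∪ B, a i + (∑ i ∈ A ∩ B, a i + b j0) := by rw [← e1]; abel
          _ ≤ ∑ j ∈ RA R A ∪ RA R B, b j + ∑ j ∈ RA R A ∩ RA R B, b j :=
              add_le_add f1 f2
          _ = _ := e2
      exact helper1 big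
    -- interpolation
    obtain ⟨c, hc0, hclo, hca, hchi⟩ := riesz_many hriesz
      ((Finset.univ.powerset.filter
          (fun A : Finset (Fin m) => i0 ∈ A ∧ j0 ∉ RA R (A.erase i0))).toList.map
        (fun A => ∑ i ∈ A, a i - ∑ j ∈ RA R A, b j + b j0))
      (b j0 :: (Finset.univ.powerset.filter
          (fun B : Finset (Fin m) => i0 ∉ B ∧ j0 ∈ RA R B)).toList.map
        (fun B => ∑ j ∈ RA R B, b j - ∑ i ∈ B, a i))
      0 (a i0) (ha i0)
      (by
        intro u hu
        rcases List.mem_cons.1 hu with rfl | hu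
        · exact hb j0
        · obtain ⟨B, hB, rfl⟩ := List.mem_map.1 hu
          rw [Finset.mem_toList, Finset.mem_filter] at hB
          exact sub_nonneg.2 (hR B))
      (by
        intro v hv
        obtain ⟨A, hA, rfl⟩ := List.mem_map.1 hv
        rw [Finset.mem_toList, Finset.mem_filter] at hA
        exact hL_le_a A hA.2.1 hA.2.2)
      (by
        intro v hv u hu
        obtain ⟨A, hA, rfl⟩ := List.mem_map.1 hv
        rw [Finset.mem_toList, Finset.mem_filter] at hA
        rcases List.mem_cons.1 hu with rfl | hu
        · exact helper3 (hR A)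
        · obtain ⟨B, hB, rfl⟩ := List.mem_map.1 hu
          rw [Finset.mem_toList, Finset.mem_filter] at hB
          exact hL_le_U A B hA.2.1 hA.2.2 hB.2.1 hB.2.2)
    have hcb : c ≤ b j0 := hchi _ (List.mem_cons_self)
    have hcU : ∀ B : Finset (Fin m), i0 ∉ B → j0 ∈ RA R B →
        c ≤ ∑ j ∈ RA R B, b j - ∑ i ∈ B, a i := by
      intro B h1 h2
      exact hchi _ (List.mem_cons_of_mem _ (List.mem_map.2 ⟨B, Finset.mem_toList.2
        (Finset.mem_filter.2 ⟨Finset.mem_powerset.2 (Finset.subset_univ _), h1, h2⟩), rfl⟩))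
    have hcL : ∀ A : Finset (Fin m), i0 ∈ A → j0 ∉ RA R (A.erase i0) →
        ∑ i ∈ A, a i - ∑ j ∈ RA R A, b j + b j0 ≤ c := by
      intro A h1 h2
      exact hclo _ (List.mem_map.2 ⟨A, Finset.mem_toList.2
        (Finset.mem_filter.2 ⟨Finset.mem_powerset.2 (Finset.subset_univ _), h1, h2⟩), rfl⟩)
    -- the reduced data
    set a' : Fin m → G := fun i => if i = i0 then a i - c else a i with ha'def
    set b' : Fin n → G := fun j => if j = j0 then b j - c else b j with hb'def
    have ha' : ∀ i, 0 ≤ a' i := by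
      intro i
      simp only [ha'def]
      split_ifs with h
      · exact sub_nonneg.2 (by rw [h]; exact hca)
      · exact ha i
    have hb' : ∀ j, 0 ≤ b' j := by
      intro j
      simp only [hb'def]
      split_ifs with h
      · exact sub_nonneg.2 (by rw [h]; exact hcb)
      · exact hb j
    have hsum' : ∑ i, a' i = ∑ j, b' j := by
      rw [ha'def, hb'def]
      rw [show (∑ i, if i = i0 then a i - c else a i) = ∑ i, a i - c from
        sum_if_sub Finset.univ (Finset.mem_univ i0) a c]
      rw [show (∑ j, if j = j0 then b j - c else b j) = ∑ j, b j - c from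
        sum_if_sub Finset.univ (Finset.mem_univ j0) b c]
      rw [hsum]
    have hR' : ∀ A : Finset (Fin m),
        ∑ i ∈ A, a' i ≤ ∑ j ∈ RA (R.erase (i0, j0)) A, b' j := by
      intro A
      rw [RA_erase i0 j0 A]
      by_cases hiA : i0 ∈ A
      · have hsa : ∑ i ∈ A, a' i = ∑ i ∈ A, a i - c := by
          rw [ha'def]; exact sum_if_sub A hiA a c
        by_cases hj : j0 ∈ RA R (A.erase i0)
        · rw [if_pos hj, hsa]
          have hsb : ∑ j ∈ RA R A, b' j = ∑ j ∈ RA R A, b j - c := by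
            rw [hb'def]; exact sum_if_sub _ (hj0 hiA) b c
          rw [hsb]
          exact sub_le_sub_right (hR A) c
        · rw [if_neg hj, hsa]
          have hsb : ∑ j ∈ (RA R A).erase j0, b' j = ∑ j ∈ (RA R A).erase j0, b j := by
            rw [hb'def]; exact sum_if_sub_not _ (Finset.notMem_erase _ _) b c
          rw [hsb]
          have e2 : b j0 + ∑ j ∈ (RA R A).erase j0, b j = ∑ j ∈ RA R A, b j :=
            Finset.add_sum_erase _ b (hj0 hiA)
          have e2' : ∑ j ∈ (RA R A).erase j0, b j = ∑ j ∈ RA R A, b j - b j0 := by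
            rw [← e2]; abel
          rw [e2']
          exact helper4 (hcL A hiA hj)
      · have hsa : ∑ i ∈ A, a' i = ∑ i ∈ A, a i := by
          rw [ha'def]; exact sum_if_sub_not A hiA a c
        have herase : A.erase i0 = A := Finset.erase_eq_of_notMem hiA
        by_cases hj : j0 ∈ RA R A
        · rw [if_pos (by rwa [herase]), hsa]
          have hsb : ∑ j ∈ RA R A, b' j = ∑ j ∈ RA R A, b j - c := by
            rw [hb'def]; exact sum_if_sub _ hj b c
          rw [hsb]
          exact helper5 (hcU A hiA hj)
        · rw [if_neg (by rwa [herase]), hsa, Finset.erase_eq_of_notMem hj]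
          have hsb : ∑ j ∈ RA R A, b' j = ∑ j ∈ RA R A, b j := by
            rw [hb'def]; exact sum_if_sub_not _ hj b c
          rw [hsb]; exact hR A
    have hcard' : (R.erase (i0, j0)).card ≤ N := by
      have h1 := Finset.card_erase_of_mem hp
      omega
    obtain ⟨c', hc'0, hc'row, hc'col, hc'zero⟩ :=
      ih (R.erase (i0, j0)) hcard' a' b' ha' hb' hsum' hR'
    refine ⟨fun i j => c' i j + if i = i0 ∧ j = j0 then c else 0, ?_, ?_, ?_, ?_⟩
    · intro i j
      apply add_nonneg (hc'0 i j)
      split_ifs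
      · exact hc0
      · exact le_refl 0
    · intro i
      rw [Finset.sum_add_distrib, hc'row i]
      by_cases hi : i = i0
      · rw [show (∑ j : Fin n, if i = i0 ∧ j = j0 then c else 0) = c by simp [hi]]
        simp [ha'def, hi]
      · rw [show (∑ j : Fin n, if i = i0 ∧ j = j0 then c else 0) = 0 by simp [hi]]
        simp [ha'def, hi]
    · intro j
      rw [Finset.sum_add_distrib, hc'col j]
      by_cases hj : j = j0
      · rw [show (∑ i : Fin m, if i = i0 ∧ j = j0 then c else 0) = c by simp [hj]]
        simp [hb'def, hj]
      · rw [show (∑ i : Fin m, if i = i0 ∧ j = j0 then c else 0) = 0 by simp [hj]]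
        simp [hb'def, hj]
    · intro i j hij
      have h1 : ¬(i = i0 ∧ j = j0) := by
        rintro ⟨rfl, rfl⟩; exact hij hp
      show c' i j + (if i = i0 ∧ j = j0 then c else 0) = 0
      rw [if_neg h1, add_zero]
      apply hc'zero
      intro hmem
      exact hij (Finset.mem_of_mem_erase hmem)

end Key


theorem stmt_10 {G : Type*} [AddCommGroup G] [PartialOrder G] [IsOrderedAddMonoid G] [Countable G]
    (htorsionfree : ∀ (g : G) (N : ℕ), 0 < N → N • g = 0 → g = 0)
    (hdirected : ∀ g : G, ∃ a b : G, 0 ≤ a ∧ 0 ≤ b ∧ g = a - b)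
    (hunperf : ∀ (g : G) (N : ℕ), 0 < N → 0 ≤ N • g → 0 ≤ g)
    (hriesz : ∀ a₁ a₂ b₁ b₂ : G, a₁ ≤ b₁ → a₁ ≤ b₂ → a₂ ≤ b₁ → a₂ ≤ b₂ →
      ∃ c : G, a₁ ≤ c ∧ a₂ ≤ c ∧ c ≤ b₁ ∧ c ≤ b₂)
    {m n : ℕ} (a : Fin m → G) (b : Fin n → G)
    (ha : ∀ i, 0 ≤ a i) (hb : ∀ j, 0 ≤ b j)
    (hsum : ∑ i, a i = ∑ j, b j)
    (R : Finset (Fin m × Fin n))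
    (hR : ∀ A : Finset (Fin m), ∑ i ∈ A, a i ≤ ∑ j ∈ RA R A, b j) :
    ∃ c : Fin m → Fin n → G,
      (∀ i j, 0 ≤ c i j) ∧
      (∀ i, ∑ j, c i j = a i) ∧
      (∀ j, ∑ i, c i j = b j) ∧
      (∀ i j, (i, j) ∉ R → c i j = 0) :=
  key_lemma hriesz R.card R le_rfl a b ha hb hsum hR
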